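/- For all x₁, x₂, μ ≥ 0, one has ψ(x₁ + x₂, μ) ≤ (1/2)·ψ(2,μ)·(ψ(x₁,μ) + ψ(x₂,μ)). -/

import Mathlib

open Real Set

noncomputable def psi (x μ : ℝ) : ℝ := x * Real.exp (μ * Real.sqrt (2 * Real.log (1 + x)))

noncomputable def Gg (t : ℝ) : ℝ := Real.sqrt (2 * Real.log (1 + t))
noncomputable def Qq (t : ℝ) : ℝ := t * Gg t
noncomputable def Ph (t : ℝ) : ℝ := Gg t + t / ((1 + t) * Gg t)

lemma Gg_pos {t : ℝ} (ht : 0 < t) : 0 < Gg t := by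
  apply Real.sqrt_pos.2
  have : (0:ℝ) < Real.log (1 + t) := Real.log_pos (by linarith)
  linarith

lemma Gg_sq {t : ℝ} (ht : 0 < t) : Gg t ^ 2 = 2 * Real.log (1 + t) := by
  apply Real.sq_sqrt
  have : (0:ℝ) < Real.log (1 + t) := Real.log_pos (by linarith)
  linarith

lemma hasDerivAt_Gg {t : ℝ} (ht : 0 < t) :
    HasDerivAt Gg (1 / ((1 + t) * Gg t)) t := by
  have h1 : HasDerivAt (fun t : ℝ => 1 + t) 1 t := by
    simpa using (hasDerivAt_id t).const_add (1:ℝ)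
  have h2 : HasDerivAt (fun t : ℝ => Real.log (1 + t)) (1 / (1 + t)) t :=
    h1.log (by linarith)
  have h3 : HasDerivAt (fun t : ℝ => 2 * Real.log (1 + t)) (2 * (1 / (1 + t))) t :=
    h2.const_mul 2
  have hne : 2 * Real.log (1 + t) ≠ 0 := by
    have : (0:ℝ) < Real.log (1 + t) := Real.log_pos (by linarith)
    positivity
  have h4 := h3.sqrt hne
  have hg := Gg_pos ht
  have h5 : 2 * (1 / (1 + t)) / (2 * Gg t) = 1 / ((1 + t) * Gg t) := by
    have h1t : (1+t : ℝ) ≠ 0 := by positivity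
    have hgne : Gg t ≠ 0 := ne_of_gt hg
    field_simp
  rw [← h5]
  exact h4

lemma hasDerivAt_Qq {t : ℝ} (ht : 0 < t) : HasDerivAt Qq (Ph t) t := by
  have h := (hasDerivAt_id t).mul (hasDerivAt_Gg ht)
  have hval : 1 * Gg t + t * (1 / ((1 + t) * Gg t)) = Ph t := by
    unfold Ph
    rw [one_mul, mul_one_div]
  rw [← hval]
  exact h

lemma hasDerivAt_Ph {t : ℝ} (ht : 0 < t) :
    HasDerivAt Ph (((t + 2) * Gg t ^ 2 - t) / ((1 + t) ^ 2 * Gg t ^ 3)) t := by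
  have hg := Gg_pos ht
  have h1t : (0:ℝ) < 1 + t := by linarith
  have hD : HasDerivAt (fun t : ℝ => (1 + t) * Gg t)
      (1 * Gg t + (1 + t) * (1 / ((1 + t) * Gg t))) t := by
    exact (((hasDerivAt_id t).const_add (1:ℝ))).mul (hasDerivAt_Gg ht)
  have hDne : (1 + t) * Gg t ≠ 0 := by positivity
  have hdiv : HasDerivAt (fun t : ℝ => t / ((1 + t) * Gg t))
      ((1 * ((1 + t) * Gg t) - t * (1 * Gg t + (1 + t) * (1 / ((1 + t) * Gg t)))) /
        ((1 + t) * Gg t) ^ 2) t := (hasDerivAt_id t).div hD hDne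
  have h := (hasDerivAt_Gg ht).add hdiv
  have hval : 1 / ((1 + t) * Gg t) +
      (1 * ((1 + t) * Gg t) - t * (1 * Gg t + (1 + t) * (1 / ((1 + t) * Gg t)))) /
        ((1 + t) * Gg t) ^ 2
      = ((t + 2) * Gg t ^ 2 - t) / ((1 + t) ^ 2 * Gg t ^ 3) := by
    have hgne : Gg t ≠ 0 := ne_of_gt hg
    have h1tne : (1 + t : ℝ) ≠ 0 := ne_of_gt h1t
    field_simp
    ring
  rw [← hval]
  exact h

lemma log_ge (t : ℝ) (ht : 0 ≤ t) : t / (1 + t) ≤ Real.log (1 + t) := by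
  have h1t : (0:ℝ) < 1 + t := by linarith
  have := Real.log_le_sub_one_of_pos (x := (1 + t)⁻¹) (by positivity)
  rw [Real.log_inv] at this
  have h2 : (1 + t)⁻¹ - 1 = -(t / (1 + t)) := by field_simp; ring
  rw [h2] at this
  linarith

lemma Ph_deriv_nonneg {t : ℝ} (ht : 0 < t) :
    0 ≤ ((t + 2) * Gg t ^ 2 - t) / ((1 + t) ^ 2 * Gg t ^ 3) := by
  have hg := Gg_pos ht
  apply div_nonneg _ (by positivity)
  rw [sub_nonneg, Gg_sq ht]
  have hlog := log_ge t ht.le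
  have h1t : (0:ℝ) < 1 + t := by linarith
  have : (t + 2) * (2 * (t / (1 + t))) ≤ (t + 2) * (2 * Real.log (1 + t)) := by
    apply mul_le_mul_of_nonneg_left (by linarith) (by linarith)
  have h2 : t ≤ (t + 2) * (2 * (t / (1 + t))) := by
    have e : (t + 2) * (2 * (t / (1 + t))) = (2 * t * (t + 2)) / (1 + t) := by ring
    rw [e, le_div_iff₀ h1t]
    nlinarith
  linarith

lemma mono_Ph : MonotoneOn Ph (Set.Ioi 0) := by
  have hderiv : ∀ x ∈ interior (Set.Ioi (0:ℝ)), 0 ≤ deriv Ph x := by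
    rw [interior_Ioi]
    intro x hx
    rw [(hasDerivAt_Ph hx).deriv]
    exact Ph_deriv_nonneg hx
  have hdiff : DifferentiableOn ℝ Ph (interior (Set.Ioi (0:ℝ))) := by
    rw [interior_Ioi]
    intro x hx
    exact (hasDerivAt_Ph hx).differentiableAt.differentiableWithinAt
  apply monotoneOn_of_deriv_nonneg (convex_Ioi 0) _ hdiff hderiv
  exact fun x hx => (hasDerivAt_Ph hx).differentiableAt.continuousAt.continuousWithinAt

lemma contOn_Qq : ContinuousOn Qq (Set.Ici 0) := by
  intro t ht
  have h1t : (1 + t : ℝ) ≠ 0 := by simp at ht; positivity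
  apply ContinuousAt.continuousWithinAt
  apply ContinuousAt.mul continuousAt_id
  apply Real.continuous_sqrt.continuousAt.comp
  exact (continuousAt_const.mul ((Real.continuousAt_log h1t).comp
    (continuous_const.add continuous_id).continuousAt))

lemma convex_Qq : ConvexOn ℝ (Set.Ici 0) Qq := by
  apply MonotoneOn.convexOn_of_deriv (convex_Ici 0) contOn_Qq
  · rw [interior_Ici]
    intro x hx
    exact (hasDerivAt_Qq hx).differentiableAt.differentiableWithinAt
  · rw [interior_Ici]
    have : Set.EqOn (deriv Qq) Ph (Set.Ioi 0) := fun x hx => (hasDerivAt_Qq hx).deriv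
    intro a ha b hb hab
    rw [this ha, this hb]
    exact mono_Ph ha hb hab

lemma sqrt_add_le' (a b : ℝ) (ha : 0 ≤ a) (hb : 0 ≤ b) :
    Real.sqrt (a + b) ≤ Real.sqrt a + Real.sqrt b := by
  rw [show a + b = a + b by rfl]
  have h : a + b ≤ (Real.sqrt a + Real.sqrt b) ^ 2 := by
    have ha' := Real.sq_sqrt ha
    have hb' := Real.sq_sqrt hb
    have := Real.sqrt_nonneg a
    have := Real.sqrt_nonneg b
    nlinarith
  calc Real.sqrt (a + b) ≤ Real.sqrt ((Real.sqrt a + Real.sqrt b) ^ 2) :=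
        Real.sqrt_le_sqrt h
    _ = Real.sqrt a + Real.sqrt b := by
        rw [Real.sqrt_sq (by positivity)]

lemma Gg_two_mul {t : ℝ} (ht : 0 ≤ t) : Gg (2 * t) ≤ Gg 2 + Gg t := by
  unfold Gg
  have h1 : Real.log (1 + 2 * t) ≤ Real.log (1 + 2) + Real.log (1 + t) := by
    rw [← Real.log_mul (by norm_num) (by positivity)]
    apply Real.log_le_log (by linarith)
    nlinarith
  have h0 : (0:ℝ) ≤ Real.log (1 + t) := Real.log_nonneg (by linarith)
  have h02 : (0:ℝ) ≤ Real.log (1 + 2) := Real.log_nonneg (by norm_num)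
  calc Real.sqrt (2 * Real.log (1 + 2 * t))
      ≤ Real.sqrt (2 * Real.log (1 + 2) + 2 * Real.log (1 + t)) := by
        apply Real.sqrt_le_sqrt; linarith
    _ ≤ Real.sqrt (2 * Real.log (1 + 2)) + Real.sqrt (2 * Real.log (1 + t)) :=
        sqrt_add_le' _ _ (by positivity) (by positivity)

/-- For all `x₁, x₂, μ ≥ 0`, `ψ(x₁+x₂,μ) ≤ (1/2)·ψ(2,μ)·(ψ(x₁,μ)+ψ(x₂,μ))`. -/
theorem psi_subadditive (x₁ x₂ μ : ℝ) (hx₁ : 0 ≤ x₁) (hx₂ : 0 ≤ x₂) (hμ : 0 ≤ μ) :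
    psi (x₁ + x₂) μ ≤ (1 / 2) * psi 2 μ * (psi x₁ μ + psi x₂ μ) := by
  rcases eq_or_lt_of_le (by positivity : (0:ℝ) ≤ x₁ + x₂) with hs | hs
  · have h1 : x₁ = 0 := by linarith
    have h2 : x₂ = 0 := by linarith
    simp [h1, h2, psi]
  · set s := x₁ + x₂ with hsdef
    -- midpoint convexity
    have hmid : Qq s ≤ (1/2 : ℝ) * Qq (2 * x₁) + (1/2 : ℝ) * Qq (2 * x₂) := by
      have := convex_Qq.2 (Set.mem_Ici.2 (by positivity : (0:ℝ) ≤ 2 * x₁))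
        (Set.mem_Ici.2 (by positivity : (0:ℝ) ≤ 2 * x₂))
        (by norm_num : (0:ℝ) ≤ 1/2) (by norm_num : (0:ℝ) ≤ 1/2) (by norm_num)
      simpa [smul_eq_mul, show (1/2 : ℝ) * (2 * x₁) + (1/2 : ℝ) * (2 * x₂) = s by ring]
        using this
    have hQ : s * Gg s ≤ x₁ * Gg (2 * x₁) + x₂ * Gg (2 * x₂) := by
      unfold Qq at hmid
      have e1 : (1/2 : ℝ) * (2 * x₁ * Gg (2 * x₁)) = x₁ * Gg (2 * x₁) := by ring
      have e2 : (1/2 : ℝ) * (2 * x₂ * Gg (2 * x₂)) = x₂ * Gg (2 * x₂) := by ring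
      rw [e1, e2] at hmid
      exact hmid
    have hkey : s * Gg s ≤ s * Gg 2 + x₁ * Gg x₁ + x₂ * Gg x₂ := by
      have b1 : x₁ * Gg (2 * x₁) ≤ x₁ * (Gg 2 + Gg x₁) :=
        mul_le_mul_of_nonneg_left (Gg_two_mul hx₁) hx₁
      have b2 : x₂ * Gg (2 * x₂) ≤ x₂ * (Gg 2 + Gg x₂) :=
        mul_le_mul_of_nonneg_left (Gg_two_mul hx₂) hx₂
      calc s * Gg s ≤ x₁ * Gg (2 * x₁) + x₂ * Gg (2 * x₂) := hQ
        _ ≤ x₁ * (Gg 2 + Gg x₁) + x₂ * (Gg 2 + Gg x₂) := by linarith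
        _ = s * Gg 2 + x₁ * Gg x₁ + x₂ * Gg x₂ := by rw [hsdef]; ring
    -- divide by s
    set p := x₁ / s with hp
    set q := x₂ / s with hq
    have hps : 0 ≤ p := by positivity
    have hqs : 0 ≤ q := by positivity
    have hpq : p + q = 1 := by rw [hp, hq]; field_simp; exact hsdef.symm
    have hGs : Gg s ≤ Gg 2 + (p * Gg x₁ + q * Gg x₂) := by
      rw [hp, hq]
      rw [← sub_nonneg]
      have e : Gg 2 + (x₁ / s * Gg x₁ + x₂ / s * Gg x₂) - Gg s
          = (s * Gg 2 + x₁ * Gg x₁ + x₂ * Gg x₂ - s * Gg s) / s := by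
        field_simp
        ring
      rw [e]
      apply div_nonneg (by linarith) hs.le
    -- exp convexity
    have hexp : Real.exp (p * (μ * Gg x₁) + q * (μ * Gg x₂))
        ≤ p * Real.exp (μ * Gg x₁) + q * Real.exp (μ * Gg x₂) := by
      have := convexOn_exp.2 (Set.mem_univ (μ * Gg x₁)) (Set.mem_univ (μ * Gg x₂)) hps hqs hpq
      simpa [smul_eq_mul] using this
    have hmain : Real.exp (μ * Gg s)
        ≤ Real.exp (μ * Gg 2) * (p * Real.exp (μ * Gg x₁) + q * Real.exp (μ * Gg x₂)) := by
      calc Real.exp (μ * Gg s)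
          ≤ Real.exp (μ * Gg 2 + (p * (μ * Gg x₁) + q * (μ * Gg x₂))) := by
            apply Real.exp_le_exp.2
            have := mul_le_mul_of_nonneg_left hGs hμ
            nlinarith [this]
        _ = Real.exp (μ * Gg 2) * Real.exp (p * (μ * Gg x₁) + q * (μ * Gg x₂)) :=
            Real.exp_add _ _
        _ ≤ Real.exp (μ * Gg 2) * (p * Real.exp (μ * Gg x₁) + q * Real.exp (μ * Gg x₂)) :=
            mul_le_mul_of_nonneg_left hexp (Real.exp_nonneg _)
    -- conclude
    show s * Real.exp (μ * Real.sqrt (2 * Real.log (1 + s)))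
        ≤ (1/2) * (2 * Real.exp (μ * Real.sqrt (2 * Real.log (1 + 2))))
          * (x₁ * Real.exp (μ * Real.sqrt (2 * Real.log (1 + x₁)))
            + x₂ * Real.exp (μ * Real.sqrt (2 * Real.log (1 + x₂))))
    have hfin := mul_le_mul_of_nonneg_left hmain hs.le
    have hsp : s * p = x₁ := by rw [hp]; field_simp
    have hsq : s * q = x₂ := by rw [hq]; field_simp
    unfold Gg at hfin
    calc s * Real.exp (μ * Real.sqrt (2 * Real.log (1 + s)))
        ≤ s * (Real.exp (μ * Real.sqrt (2 * Real.log (1 + 2)))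
            * (p * Real.exp (μ * Real.sqrt (2 * Real.log (1 + x₁)))
              + q * Real.exp (μ * Real.sqrt (2 * Real.log (1 + x₂))))) := hfin
      _ = (1/2) * (2 * Real.exp (μ * Real.sqrt (2 * Real.log (1 + 2))))
          * ((s * p) * Real.exp (μ * Real.sqrt (2 * Real.log (1 + x₁)))
            + (s * q) * Real.exp (μ * Real.sqrt (2 * Real.log (1 + x₂)))) := by ring
      _ = _ := by rw [hsp, hsq]
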